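/- Let I be a finite set, for each i ∈ I let m_i be a positive integer and R_i a unital subring of ℚ such that every prime dividing m_i is not invertible in R_i. Let R = ∏_i R_i and K = ℤ·1 + ∏_i m_i R_i. Then the group of units of K equals K ∩ R*, i.e., every element of K that is invertible in R has its inverse in K. -/

import Mathlib

theorem stmt_6 (I : Type*) [Fintype I] (R : I → Subring ℚ) (m : I → ℕ)
    (hm : ∀ i, 0 < m i)
    (hprime : ∀ i, ∀ p : ℕ, p.Prime → p ∣ m i →
      ¬ IsUnit (⟨((p : ℚ)), by exact_mod_cast natCast_mem (R i) p⟩ : R i))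
    (K : Set (∀ i, R i))
    (hK : K = {c | ∃ (γ : ℤ) (y : ∀ i, R i),
      ∀ i, (c i : ℚ) = (γ : ℚ) + (m i : ℚ) * (y i : ℚ)})
    (c : ∀ i, R i) (hc : c ∈ K) :
    IsUnit c ↔ ∃ d ∈ K, c * d = 1 := by
  classical
  constructor
  · intro hcu
    rw [hK] at hc
    obtain ⟨γ, y, hy⟩ := hc
    obtain ⟨u, hu⟩ := hcu
    set d : ∀ i, R i := ↑u⁻¹ with hd
    have hcd : c * d = 1 := by rw [← hu, hd]; exact u.mul_inv
    have hcdi : ∀ i, (c i : ℚ) * (d i : ℚ) = 1 := by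
      intro i
      have := congrFun hcd i
      exact_mod_cast congrArg (fun x : R i => (x : ℚ)) this
    have hc0 : ∀ i, (c i : ℚ) ≠ 0 := fun i => left_ne_zero_of_mul_eq_one (hcdi i)
    -- units in each R i
    have hciu : ∀ i, IsUnit (c i) := by
      intro i
      exact IsUnit.of_mul_eq_one _ (congrFun hcd i)
    -- coprimality
    have hco : ∀ i, IsCoprime γ (m i : ℤ) := by
      intro i
      rw [Int.isCoprime_iff_gcd_eq_one]
      by_contra hne
      obtain ⟨p, hp, hpd⟩ := Nat.exists_prime_and_dvd hne
      have hpγ : (p : ℤ) ∣ γ :=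
        dvd_trans (Int.natCast_dvd_natCast.mpr hpd) (Int.gcd_dvd_left _ _)
      have hpm' : (p : ℤ) ∣ (m i : ℤ) :=
        dvd_trans (Int.natCast_dvd_natCast.mpr hpd) (Int.gcd_dvd_right _ _)
      have hpm : p ∣ m i := Int.natCast_dvd_natCast.mp hpm'
      obtain ⟨γ', hγ'⟩ := hpγ
      obtain ⟨m', hm'⟩ := hpm
      have hp0 : (p : ℚ) ≠ 0 := by exact_mod_cast hp.ne_zero
      set pp : R i := ⟨(p : ℚ), by exact_mod_cast natCast_mem (R i) p⟩ with hpp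
      have hdvd : pp ∣ c i := by
        refine ⟨(γ' : R i) + (m' : R i) * y i, ?_⟩
        apply Subtype.ext
        push_cast [hpp]
        rw [hy i, hγ', hm']
        push_cast
        ring
      exact hprime i p hp (Int.natCast_dvd_natCast.mp hpm') (isUnit_of_dvd_unit hdvd (hciu i))
    have hcoN : IsCoprime γ (∏ i, (m i : ℤ)) :=
      IsCoprime.prod_right (fun i _ => hco i)
    obtain ⟨δ, k, hδk⟩ := hcoN
    refine ⟨d, ?_, hcd⟩
    rw [hK]
    refine ⟨δ, fun i => d i * (((k * ∏ j ∈ Finset.univ.erase i, (m j : ℤ)) : ℤ) - (δ : R i) * y i), ?_⟩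
    intro i
    have hn : (m i : ℤ) * ∏ j ∈ Finset.univ.erase i, (m j : ℤ) = ∏ j, (m j : ℤ) :=
      Finset.mul_prod_erase Finset.univ (fun j => (m j : ℤ)) (Finset.mem_univ i)
    have hdi : (d i : ℚ) = (c i : ℚ)⁻¹ := eq_inv_of_mul_eq_one_right (hcdi i)
    have hnq : (m i : ℚ) * ((∏ j ∈ Finset.univ.erase i, (m j : ℤ) : ℤ) : ℚ) = ((∏ j, (m j : ℤ) : ℤ) : ℚ) := by
      exact_mod_cast congrArg (fun x : ℤ => (x : ℚ)) hn
    have hδkq : (δ : ℚ) * (γ : ℚ) + (k : ℚ) * ((∏ j, (m j : ℤ) : ℤ) : ℚ) = 1 := by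
      exact_mod_cast congrArg (fun x : ℤ => (x : ℚ)) hδk
    have hci0 : (γ : ℚ) + (m i : ℚ) * (y i : ℚ) ≠ 0 := by rw [← hy i]; exact hc0 i
    have key : ((γ : ℚ) + (m i : ℚ) * (y i : ℚ)) * ((γ : ℚ) + (m i : ℚ) * (y i : ℚ))⁻¹ = 1 :=
      mul_inv_cancel₀ hci0
    push_cast at hnq hδkq
    push_cast [hdi]
    rw [hy i]
    linear_combination (δ:ℚ) * key - ((γ : ℚ) + (m i : ℚ) * (y i : ℚ))⁻¹ * hδkq -
      ((γ : ℚ) + (m i : ℚ) * (y i : ℚ))⁻¹ * (k:ℚ) * hnq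
  · rintro ⟨d, _, hcd⟩
    exact IsUnit.of_mul_eq_one (a := c) d hcd
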